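/- Let A be the n×n upper-shift matrix, B = eₙ, λ > 0, K = η₁ᵀ(A+λI)ⁿ, and H the matrix with rows h_k = -η₁ᵀ(A+λI)^{k-1}. Then H(A - BK) = (A - λI)H, i.e., the closed-loop matrix A - BK is similar via H to A - λI. -/

import Mathlib

open Matrix

/-- The upper-shift nilpotent matrix: ones on the superdiagonal. -/
noncomputable def upperShift (n : ℕ) : Matrix (Fin n) (Fin n) ℝ :=
  Matrix.of fun i j => if (j : ℕ) = (i : ℕ) + 1 then 1 else 0

/-- The last standard basis vector `eₙ`. -/
noncomputable def lastBasis (n : ℕ) : Fin n → ℝ :=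
  fun i => if (i : ℕ) = n - 1 then 1 else 0

open Finset

-- row recursion
lemma rowrec (n : ℕ) (hn : 0 < n) (lam : ℝ) (k : ℕ) (j : Fin n) :
    ((upperShift n + lam • (1 : Matrix (Fin n) (Fin n) ℝ)) ^ (k+1)) ⟨0, hn⟩ j
      = (∑ m, ((upperShift n + lam • (1 : Matrix (Fin n) (Fin n) ℝ)) ^ k) ⟨0, hn⟩ m
          * (upperShift n m j))
        + lam * ((upperShift n + lam • (1 : Matrix (Fin n) (Fin n) ℝ)) ^ k) ⟨0, hn⟩ j := by
  rw [pow_succ, mul_apply]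
  simp only [Matrix.add_apply, Matrix.smul_apply, one_apply, mul_add, Finset.sum_add_distrib]
  congr 1
  simp only [smul_eq_mul, mul_ite, mul_one, mul_zero]
  rw [Finset.sum_ite_eq' univ j]
  simp [mul_comm]

lemma supp (n : ℕ) (hn : 0 < n) (lam : ℝ) :
    ∀ (k : ℕ) (j : Fin n), k ≤ (j : ℕ) →
      ((upperShift n + lam • (1 : Matrix (Fin n) (Fin n) ℝ)) ^ k) ⟨0, hn⟩ j
        = if (j : ℕ) = k then 1 else 0 := by
  intro k
  induction k with
  | zero =>
    intro j _
    rw [pow_zero, one_apply]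
    by_cases h : (j : ℕ) = 0
    · simp [Fin.ext_iff, h]
    · simp [Fin.ext_iff, h, Ne.symm h]
  | succ k ih =>
    intro j hj
    rw [rowrec]
    have hj1 : 1 ≤ (j : ℕ) := le_trans (Nat.le_add_left 1 k) hj
    have hjk : ((j : ℕ) ≠ k) := by omega
    have hfkj : ((upperShift n + lam • (1 : Matrix (Fin n) (Fin n) ℝ)) ^ k) ⟨0, hn⟩ j = 0 := by
      rw [ih j (by omega), if_neg hjk]
    set m₀ : Fin n := ⟨(j : ℕ) - 1, lt_trans (by omega) j.isLt⟩ with hm₀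
    have hsum : (∑ m, ((upperShift n + lam • (1 : Matrix (Fin n) (Fin n) ℝ)) ^ k) ⟨0, hn⟩ m
          * (upperShift n m j))
        = ((upperShift n + lam • (1 : Matrix (Fin n) (Fin n) ℝ)) ^ k) ⟨0, hn⟩ m₀ := by
      rw [Finset.sum_eq_single m₀]
      · simp only [upperShift, of_apply, hm₀]
        rw [if_pos (by omega), mul_one]
      · intro m _ hm
        simp only [upperShift, of_apply]
        rw [if_neg, mul_zero]
        intro hc
        apply hm
        apply Fin.ext
        simp [hm₀]; omega
      · intro h; exact absurd (Finset.mem_univ m₀) h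
    rw [hsum, hfkj, mul_zero, add_zero, ih m₀ (by simp [hm₀]; omega)]
    simp only [hm₀]
    by_cases h : (j : ℕ) = k + 1
    · rw [if_pos (by omega), if_pos h]
    · rw [if_neg (by omega), if_neg h]

theorem stmt3 (n : ℕ) (hn : 0 < n) (lam : ℝ) (hlam : 0 < lam)
    (A : Matrix (Fin n) (Fin n) ℝ) (hA : A = upperShift n)
    (B : Fin n → ℝ) (hB : B = lastBasis n)
    (K : Fin n → ℝ)
    (hK : ∀ j, K j = ((A + lam • (1 : Matrix (Fin n) (Fin n) ℝ)) ^ n) ⟨0, hn⟩ j)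
    (H : Matrix (Fin n) (Fin n) ℝ)
    (hH : ∀ k j : Fin n,
      H k j = -(((A + lam • (1 : Matrix (Fin n) (Fin n) ℝ)) ^ (k : ℕ)) ⟨0, hn⟩ j)) :
    H * (A - vecMulVec B K) = (A - lam • (1 : Matrix (Fin n) (Fin n) ℝ)) * H := by
  subst hA hB
  set M := upperShift n + lam • (1 : Matrix (Fin n) (Fin n) ℝ) with hM
  set f : ℕ → Fin n → ℝ := fun k j => (M ^ k) ⟨0, hn⟩ j with hf
  ext k j
  rw [mul_apply, mul_apply]
  -- LHS
  have hL : ∑ m, H k m * ((upperShift n - vecMulVec (lastBasis n) K) m j)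
      = -(f (k + 1) j) + lam * f k j + (if (k : ℕ) = n - 1 then 1 else 0) * f n j := by
    have expand : ∀ m, H k m * ((upperShift n - vecMulVec (lastBasis n) K) m j)
        = -(f k m * upperShift n m j) + (f k m * (if (m : ℕ) = n - 1 then 1 else 0)) * K j := by
      intro m
      rw [hH, Matrix.sub_apply, vecMulVec_apply]
      simp only [lastBasis]
      ring
    rw [Finset.sum_congr rfl (fun m _ => expand m), Finset.sum_add_distrib,
      Finset.sum_neg_distrib]
    have h1 : ∑ m, f k m * upperShift n m j = f (k + 1) j - lam * f k j := by
      have := rowrec n hn lam k j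
      rw [hf]; simp only [← hM] at this ⊢
      linarith [this]
    have h2 : (∑ m, (f k m * (if (m : ℕ) = n - 1 then 1 else 0)) * K j)
        = (if (k : ℕ) = n - 1 then 1 else 0) * f n j := by
      set last : Fin n := ⟨n - 1, by omega⟩ with hlast
      rw [Finset.sum_eq_single last]
      · have hl : (last : ℕ) = n - 1 := by simp [hlast]
        have this1 : f k last = if (k : ℕ) = n - 1 then 1 else 0 := by
          have h := supp n hn lam k last (by omega)
          rw [← hM] at h
          simp only [hf]
          rw [h, hl]
          by_cases h2 : (k : ℕ) = n - 1
          · rw [if_pos (by omega), if_pos h2]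
          · rw [if_neg (by omega), if_neg h2]
        rw [this1, if_pos hl, mul_one, hK j]
      · intro m _ hm
        rw [if_neg, mul_zero, zero_mul]
        intro hc; exact hm (Fin.ext (by simp [hlast]; omega))
      · intro h; exact absurd (Finset.mem_univ last) h
    rw [h1, h2]; ring
  -- RHS
  have hR : ∑ m, ((upperShift n - lam • (1 : Matrix (Fin n) (Fin n) ℝ)) k m) * H m j
      = -(if (k : ℕ) + 1 < n then f (k + 1) j else 0) + lam * f k j := by
    have expand : ∀ m, ((upperShift n - lam • (1 : Matrix (Fin n) (Fin n) ℝ)) k m) * H m j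
        = (if (m : ℕ) = (k : ℕ) + 1 then 1 else 0) * (-(f (m : ℕ) j))
          + (if k = m then lam * f k j else 0) := by
      intro m
      rw [hH, Matrix.sub_apply, Matrix.smul_apply, one_apply]
      simp only [upperShift, of_apply, hf, smul_eq_mul]
      by_cases h : k = m
      · subst h
        simp only [if_neg (show ¬((k : ℕ) = (k : ℕ) + 1) by omega),
          eq_self_iff_true, if_true]
        ring
      · by_cases h2 : (m : ℕ) = (k : ℕ) + 1
        · simp only [if_pos h2, if_neg h]; ring
        · simp only [if_neg h2, if_neg h]; ring
    rw [Finset.sum_congr rfl (fun m _ => expand m), Finset.sum_add_distrib,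
      Finset.sum_ite_eq univ k (fun _ => lam * f k j)]
    rw [if_pos (Finset.mem_univ k)]
    congr 1
    by_cases h : (k : ℕ) + 1 < n
    · rw [if_pos h, Finset.sum_eq_single (⟨(k:ℕ)+1, h⟩ : Fin n)]
      · rw [if_pos rfl, one_mul]
      · intro m _ hm
        rw [if_neg, zero_mul]
        intro hc; exact hm (Fin.ext hc)
      · intro h'; exact absurd (Finset.mem_univ _) h'
    · rw [if_neg h, neg_zero]
      apply Finset.sum_eq_zero
      intro m _
      rw [if_neg (by omega), zero_mul]
  rw [hL, hR]
  by_cases h : (k : ℕ) + 1 < n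
  · rw [if_pos h, if_neg (by omega)]; ring
  · have hk : (k : ℕ) = n - 1 := by omega
    rw [if_neg h, if_pos hk, one_mul]
    have : (k : ℕ) + 1 = n := by omega
    rw [this]; ring
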